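/- A monotone map p : X → Y between join-semilattices is left Kan-injective with respect to the embedding of the 2-element antichain into {0,1,⊤} if and only if p preserves binary joins. -/

import Mathlib

/-- `g` is the left Kan extension of `f` along `h` in `Pos`, in the strong sense. -/
def IsLanPos {A A' X : Type} [PartialOrder A] [PartialOrder A'] [PartialOrder X]
    (h : A →o A') (f : A →o X) (g : A' →o X) : Prop :=
  g.comp h = f ∧ ∀ g' : A' →o X, f ≤ g'.comp h → g ≤ g'

/-- The two-element antichain `{0, 1}`. -/
inductive TwoAntichain : Type
  | zero
  | one

/-- The discrete order on the two-element antichain. -/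
instance : PartialOrder TwoAntichain where
  le x y := x = y
  le_refl _ := rfl
  le_trans a b c h₁ h₂ := by
    have e₁ : a = b := h₁
    have e₂ : b = c := h₂
    show a = c
    exact e₁.trans e₂
  le_antisymm _ _ h _ := h

/-- The embedding of the two-element antichain `{0,1}` into `{0,1,⊤}`. -/
def antichainEmb : TwoAntichain →o WithTop TwoAntichain :=
  ⟨fun x => (x : WithTop TwoAntichain), fun x y hxy => by
    have e : x = y := hxy
    subst e
    exact le_refl _⟩


/-- Canonical left Kan extension of `f` along the antichain embedding. -/
def lanF {X : Type} [SemilatticeSup X] (f : TwoAntichain →o X) :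
    WithTop TwoAntichain →o X :=
  ⟨fun t => t.elim (f .zero ⊔ f .one) f, by
    intro a b hab
    match a, b with
    | ⊤, ⊤ => exact le_refl _
    | ⊤, (b' : TwoAntichain) => exact absurd hab (by simp)
    | (a' : TwoAntichain), ⊤ =>
        cases a' with
        | zero => exact le_sup_left
        | one => exact le_sup_right
    | (a' : TwoAntichain), (b' : TwoAntichain) =>
        have : a' = b' := WithTop.coe_le_coe.mp hab
        subst this; exact le_refl _⟩

lemma lanF_isLan {X : Type} [SemilatticeSup X] (f : TwoAntichain →o X) :
    IsLanPos antichainEmb f (lanF f) := by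
  constructor
  · ext a; cases a <;> rfl
  · intro g' hg' t
    match t with
    | (a : TwoAntichain) => exact hg' a
    | ⊤ =>
        apply sup_le
        · exact le_trans (hg' .zero) (g'.monotone le_top)
        · exact le_trans (hg' .one) (g'.monotone le_top)

lemma lan_unique {A A' X : Type} [PartialOrder A] [PartialOrder A'] [PartialOrder X]
    {h : A →o A'} {f : A →o X} {g₁ g₂ : A' →o X}
    (h₁ : IsLanPos h f g₁) (h₂ : IsLanPos h f g₂) : g₁ = g₂ :=
  le_antisymm (h₁.2 g₂ (le_of_eq h₂.1.symm)) (h₂.2 g₁ (le_of_eq h₁.1.symm))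

/-- A monotone map `p : X → Y` between join-semilattices is left
Kan-injective w.r.t. the embedding of the two-element antichain into `{0,1,⊤}`
iff `p` preserves binary joins. -/
theorem stmt6 {X Y : Type} [SemilatticeSup X] [SemilatticeSup Y] (p : X →o Y) :
    (∀ (f : TwoAntichain →o X) (g : WithTop TwoAntichain →o X)
        (g' : WithTop TwoAntichain →o Y),
      IsLanPos antichainEmb f g → IsLanPos antichainEmb (p.comp f) g' →
        p.comp g = g') ↔
    (∀ x y : X, p (x ⊔ y) = p x ⊔ p y) := by
  constructor
  · intro H x y
    let f : TwoAntichain →o X :=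
      ⟨fun t => t.rec x y, by intro a b hab; have : a = b := hab; subst this; exact le_refl _⟩
    have hx : p.comp (lanF f) = lanF (p.comp f) :=
      H f (lanF f) (lanF (p.comp f)) (lanF_isLan f) (lanF_isLan (p.comp f))
    have := congrFun (congrArg (fun q : WithTop TwoAntichain →o Y => (q : WithTop TwoAntichain → Y)) hx) ⊤
    exact this
  · intro hp f g g' hg hg'
    have e1 : g = lanF f := lan_unique hg (lanF_isLan f)
    have e2 : g' = lanF (p.comp f) := lan_unique hg' (lanF_isLan (p.comp f))
    subst e1; subst e2
    ext t
    match t with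
    | (a : TwoAntichain) => rfl
    | ⊤ => exact hp (f .zero) (f .one)
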